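/- Let F = ⟨W, R, {S_w | w ∈ W}⟩ be a Veltman frame, f, g ultrafilters on W, l a collection of subsets of W, and A, B ⊆ W. If f ≺_l g, S⁻¹(A, B) ∈ f, and A ∈ g, then there exists an ultrafilter h on W with f ≺_l h and B ∈ h. -/

import Mathlib

/-- Formulas of interpretability logic. -/
inductive ILFormula : Type where
  | atom : ℕ → ILFormula
  | falsum : ILFormula
  | impl : ILFormula → ILFormula → ILFormula
  | box : ILFormula → ILFormula
  | rhd : ILFormula → ILFormula → ILFormula
  deriving DecidableEq

namespace ILFormula
def neg (α : ILFormula) : ILFormula := impl α falsum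
def dia (α : ILFormula) : ILFormula := neg (box (neg α))
def conj (α β : ILFormula) : ILFormula := neg (impl α (neg β))
def disj (α β : ILFormula) : ILFormula := impl (neg α) β
end ILFormula

open ILFormula

/-- The Hilbert calculus IL: classical propositional logic plus K, GL, J1–J5,
    with modus ponens and necessitation. -/
inductive ILProv : ILFormula → Prop where
  | imp1 (α β) : ILProv (impl α (impl β α))
  | imp2 (α β γ) : ILProv (impl (impl α (impl β γ)) (impl (impl α β) (impl α γ)))
  | dne (α) : ILProv (impl (impl (impl α falsum) falsum) α)
  | axK (α β) : ILProv (impl (box (impl α β)) (impl (box α) (box β)))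
  | axGL (α) : ILProv (impl (box (impl (box α) α)) (box α))
  | axJ1 (α β) : ILProv (impl (box (impl α β)) (rhd α β))
  | axJ2 (α β γ) : ILProv (impl (conj (rhd α β) (rhd β γ)) (rhd α γ))
  | axJ3 (α β γ) : ILProv (impl (conj (rhd α γ) (rhd β γ)) (rhd (disj α β) γ))
  | axJ4 (α β) : ILProv (impl (rhd α β) (impl (dia α) (dia β)))
  | axJ5 (α) : ILProv (rhd (dia α) α)
  | mp {α β} : ILProv (impl α β) → ILProv α → ILProv β
  | nec {α} : ILProv α → ILProv (box α)

/-- Derivability in IL from a finite set of hypotheses, with necessitation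
    not applied to hypotheses. -/
inductive ILProvFrom (Γ : Finset ILFormula) : ILFormula → Prop where
  | hyp {φ} : φ ∈ Γ → ILProvFrom Γ φ
  | thm {φ} : ILProv φ → ILProvFrom Γ φ
  | mp {φ ψ} : ILProvFrom Γ (impl φ ψ) → ILProvFrom Γ φ → ILProvFrom Γ ψ

/-- A Veltman frame. -/
structure VeltmanFrame (W : Type*) : Type _ where
  nonempty : Nonempty W
  R : W → W → Prop
  S : W → W → W → Prop
  R_trans : ∀ {x y z}, R x y → R y z → R x z
  R_cwf : ¬ ∃ c : ℕ → W, ∀ n, R (c n) (c (n + 1))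
  S_dom : ∀ {w u v}, S w u v → R w u ∧ R w v
  S_refl : ∀ {w u}, R w u → S w u u
  S_trans : ∀ {w u v x}, S w u v → S w v x → S w u x
  R_sub_S : ∀ {w u v}, R w u → R w v → R u v → S w u v

variable {W : Type*}

def Rinv (F : VeltmanFrame W) (X : Set W) : Set W := {w | ∃ x ∈ X, F.R w x}

def Rinvhat (F : VeltmanFrame W) (Y : Set W) : Set W := {x | ∀ y, F.R x y → y ∈ Y}

def Sinv (F : VeltmanFrame W) (X Y : Set W) : Set W :=
  {w | ∀ x ∈ X, F.R w x → ∃ y ∈ Y, F.S w x y}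

/-- The algebraic interpretation of a formula in a Veltman frame under valuation `e`. -/
def interp (F : VeltmanFrame W) (e : ℕ → Set W) : ILFormula → Set W
  | .atom n => e n
  | .falsum => ∅
  | .impl α β => (interp F e α)ᶜ ∪ interp F e β
  | .box α => Rinvhat F (interp F e α)
  | .rhd α β => Sinv F (interp F e α) (interp F e β)

/-- Forcing in a Veltman model `⟨F, ev⟩`. -/
def forces (F : VeltmanFrame W) (ev : ℕ → Set W) : ILFormula → W → Prop
  | .atom n, w => w ∈ ev n
  | .falsum, _ => False
  | .impl α β, w => forces F ev α w → forces F ev β w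
  | .box α, w => ∀ v, F.R w v → forces F ev α v
  | .rhd α β, w => ∀ u, F.R w u → forces F ev α u → ∃ v, F.S w u v ∧ forces F ev β v

/-- The filter-assuring successor relation `f ≺_l g`. -/
def Assur (F : VeltmanFrame W) (l : Set (Set W)) (f g : Ultrafilter W) : Prop :=
  ∀ (A : Set W) (T : Finset (Set W)), (↑T : Set (Set W)) ⊆ l →
    Sinv F Aᶜ (⋃ S ∈ T, Sᶜ) ∈ f → A ∈ g ∧ Rinvhat F A ∈ g

/-- A proper filter of subsets of `W`. -/
def IsProperFilter (l : Set (Set W)) : Prop :=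
  l.Nonempty ∧ ∅ ∉ l ∧ (∀ A ∈ l, ∀ B : Set W, A ⊆ B → B ∈ l) ∧
    (∀ A ∈ l, ∀ B ∈ l, A ∩ B ∈ l)

/-- Worlds of the ultrafilter extension: an ultrafilter with a sequence of labels. -/
abbrev UEWorld (W : Type*) := Ultrafilter W × List (Set (Set W))

/-- The domain `W^ue` of the ultrafilter extension, generated inductively. -/
inductive InWue (F : VeltmanFrame W) : UEWorld W → Prop where
  | nil (f : Ultrafilter W) : InWue F (f, [])
  | cons {f g : Ultrafilter W} {σ : List (Set (Set W))} {l : Set (Set W)} :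
      InWue F (f, σ) → Assur F l f g → InWue F (g, σ ++ [l])

/-- The one-step relation of the ultrafilter extension. -/
def RueOne (F : VeltmanFrame W) (p q : UEWorld W) : Prop :=
  ∃ l : Set (Set W), q.2 = p.2 ++ [l] ∧ Assur F l p.1 q.1

/-- `R^ue`: the transitive closure of the one-step relation. -/
def Rue (F : VeltmanFrame W) : UEWorld W → UEWorld W → Prop :=
  Relation.TransGen (RueOne F)

/-- `S^ue_p`: the smallest reflexive transitive relation containing the
    restriction of `R^ue` to `R^ue[p]` and the one-step `S` relation. -/
inductive Sue (F : VeltmanFrame W) (p : UEWorld W) : UEWorld W → UEWorld W → Prop where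
  | refl (q) : Rue F p q → Sue F p q q
  | ofR {q r} : Rue F p q → Rue F p r → Rue F q r → Sue F p q r
  | one {q r} : Rue F p q → Rue F p r → q.2[p.2.length]? = r.2[p.2.length]? → Sue F p q r
  | trans {q r s} : Sue F p q r → Sue F p r s → Sue F p q s

/-- Forcing in the ultrafilter extension `M^ue`. -/
def ueForces (F : VeltmanFrame W) (ev : ℕ → Set W) : ILFormula → UEWorld W → Prop
  | .atom n, p => ev n ∈ p.1
  | .falsum, _ => False
  | .impl α β, p => ueForces F ev α p → ueForces F ev β p
  | .box α, p => ∀ q : UEWorld W, InWue F q → Rue F p q → ueForces F ev α q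
  | .rhd α β, p => ∀ q : UEWorld W, InWue F q → Rue F p q → ueForces F ev α q →
      ∃ r : UEWorld W, InWue F r ∧ Sue F p q r ∧ ueForces F ev β r

/-- Conjunction of a finite list of formulas (`⊤` for the empty list). -/
def conjList : List ILFormula → ILFormula
  | [] => impl falsum falsum
  | φ :: L => conj φ (conjList L)

/-- The Pencil frame condition. -/
def Pencil (F : VeltmanFrame W) : Prop :=
  ∀ x y z u v : W, F.R x y → F.S x y z → F.R z u → F.R y v → F.S x v u → F.R y u

/-- existence of an assuring successor containing B. -/
theorem exists_assur_successor {W : Type*} (F : VeltmanFrame W)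
    (f g : Ultrafilter W) (l : Set (Set W)) (A B : Set W)
    (hfg : Assur F l f g) (hS : Sinv F A B ∈ f) (hA : A ∈ g) :
    ∃ h : Ultrafilter W, Assur F l f h ∧ B ∈ h := by

  classical
  set G : Set (Set W) :=
    {C | ∃ T : Finset (Set W), (↑T : Set (Set W)) ⊆ l ∧ Sinv F Cᶜ (⋃ S ∈ T, Sᶜ) ∈ f} with hGdef
  -- univ ∈ G
  have hunivG : (Set.univ : Set W) ∈ G := by
    refine ⟨∅, by simp, ?_⟩
    have : Sinv F (Set.univ : Set W)ᶜ (⋃ S ∈ (∅ : Finset (Set W)), Sᶜ) = Set.univ := by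
      ext w; simp [Sinv]
    rw [this]; exact Filter.univ_mem
  -- G closed under binary intersections
  have hGinter : ∀ C ∈ G, ∀ D ∈ G, C ∩ D ∈ G := by
    rintro C ⟨T1, hT1, hf1⟩ D ⟨T2, hT2, hf2⟩
    refine ⟨T1 ∪ T2, ?_, ?_⟩
    · intro S hSmem
      simp only [Finset.coe_union, Set.mem_union] at hSmem
      rcases hSmem with h | h
      · exact hT1 h
      · exact hT2 h
    · have hsub : Sinv F Cᶜ (⋃ S ∈ T1, Sᶜ) ∩ Sinv F Dᶜ (⋃ S ∈ T2, Sᶜ) ⊆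
          Sinv F (C ∩ D)ᶜ (⋃ S ∈ (T1 ∪ T2), Sᶜ) := by
        rintro w ⟨h1, h2⟩ x hx hR
        by_cases hxC : x ∈ C
        · have hxD : x ∉ D := fun hD => hx ⟨hxC, hD⟩
          obtain ⟨y, hy, hSy⟩ := h2 x hxD hR
          refine ⟨y, ?_, hSy⟩
          simp only [Set.mem_iUnion] at hy ⊢
          obtain ⟨S, hSm, hyS⟩ := hy
          exact ⟨S, Finset.mem_union_right _ hSm, hyS⟩
        · obtain ⟨y, hy, hSy⟩ := h1 x hxC hR
          refine ⟨y, ?_, hSy⟩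
          simp only [Set.mem_iUnion] at hy ⊢
          obtain ⟨S, hSm, hyS⟩ := hy
          exact ⟨S, Finset.mem_union_left _ hSm, hyS⟩
      exact Filter.mem_of_superset (Filter.inter_mem hf1 hf2) hsub
  -- key nonemptiness
  have key : ∀ C ∈ G, (B ∩ (C ∩ Rinvhat F C)).Nonempty := by
    rintro C ⟨T, hT, hf⟩
    by_contra hne
    rw [Set.not_nonempty_iff_eq_empty] at hne
    have hsub : Sinv F A B ∩ Sinv F Cᶜ (⋃ S ∈ T, Sᶜ) ⊆
        Sinv F (A ∩ (C ∩ Rinvhat F C)) (⋃ S ∈ T, Sᶜ) := by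
      rintro w ⟨h1, h2⟩ x ⟨hxA, hxC, _⟩ hR
      obtain ⟨y, hyB, hSxy⟩ := h1 x hxA hR
      have hymem : y ∉ C ∩ Rinvhat F C := by
        intro hy
        have : y ∈ B ∩ (C ∩ Rinvhat F C) := ⟨hyB, hy⟩
        rw [hne] at this
        exact this
      have hRwy : F.R w y := (F.S_dom hSxy).2
      by_cases hyC : y ∈ C
      · have : ¬ (∀ z, F.R y z → z ∈ C) := fun hh => hymem ⟨hyC, hh⟩
        push_neg at this
        obtain ⟨z, hRyz, hzC⟩ := this
        have hRwz : F.R w z := F.R_trans hRwy hRyz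
        obtain ⟨u, hu, hSzu⟩ := h2 z hzC hRwz
        exact ⟨u, hu, F.S_trans (F.S_trans hSxy (F.R_sub_S hRwy hRwz hRyz)) hSzu⟩
      · obtain ⟨u, hu, hSyu⟩ := h2 y hyC hRwy
        exact ⟨u, hu, F.S_trans hSxy hSyu⟩
    have hmem : Sinv F ((A ∩ (C ∩ Rinvhat F C))ᶜ)ᶜ (⋃ S ∈ T, Sᶜ) ∈ f := by
      rw [compl_compl]
      exact Filter.mem_of_superset (Filter.inter_mem hS hf) hsub
    have h1 := (hfg _ T hT hmem).1
    have h2 := hfg C T hT hf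
    have h3 : A ∩ (C ∩ Rinvhat F C) ∈ g :=
      Filter.inter_mem hA (Filter.inter_mem h2.1 h2.2)
    exact (Ultrafilter.compl_notMem_iff.mpr h3) h1
  -- finite intersections of the marked sets
  have hfin : ∀ t : Set (Set W), t.Finite →
      t ⊆ (fun C => C ∩ Rinvhat F C) '' G →
      ∃ C ∈ G, C ∩ Rinvhat F C ⊆ ⋂₀ t := by
    intro t ht
    refine Set.Finite.induction_on
      (motive := fun t _ => t ⊆ (fun C => C ∩ Rinvhat F C) '' G →
        ∃ C ∈ G, C ∩ Rinvhat F C ⊆ ⋂₀ t) t ht (fun _ => ⟨Set.univ, hunivG, by simp⟩) ?_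
    intro a s ha hsfin ih hsub
    obtain ⟨C, hCG, hC⟩ := ih (fun x hx => hsub (Set.mem_insert_of_mem _ hx))
    obtain ⟨D, hDG, hDeq⟩ := hsub (Set.mem_insert a s)
    refine ⟨D ∩ C, hGinter D hDG C hCG, ?_⟩
    rintro x ⟨⟨hxD, hxC⟩, hxR⟩
    have hxRD : x ∈ Rinvhat F D := fun z hz => (hxR z hz).1
    have hxRC : x ∈ Rinvhat F C := fun z hz => (hxR z hz).2
    rw [Set.sInter_insert]
    exact ⟨hDeq ▸ ⟨hxD, hxRD⟩, hC ⟨hxC, hxRC⟩⟩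
  -- build the filter and ultrafilter
  set 𝒢 : Set (Set W) := insert B ((fun C => C ∩ Rinvhat F C) '' G) with h𝒢
  have hFIP : ∀ t ⊆ 𝒢, t.Finite → (⋂₀ t).Nonempty := by
    intro t ht htfin
    have hsub' : t \ {B} ⊆ (fun C => C ∩ Rinvhat F C) '' G := by
      rintro s ⟨hs, hsB⟩
      rcases ht hs with h | h
      · exact absurd h hsB
      · exact h
    obtain ⟨C, hCG, hC⟩ := hfin (t \ {B}) (htfin.subset Set.diff_subset) hsub'
    obtain ⟨x, hxB, hxC⟩ := key C hCG
    refine ⟨x, ?_⟩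
    intro s hs
    by_cases hsB : s = B
    · rw [hsB]; exact hxB
    · exact hC hxC s ⟨hs, hsB⟩
  have hNeBot : (Filter.generate 𝒢).NeBot := by
    rw [Filter.generate_neBot_iff]
    exact hFIP
  obtain ⟨h, hle⟩ := Ultrafilter.exists_le (Filter.generate 𝒢)
  have hmem𝒢 : ∀ s ∈ 𝒢, s ∈ h := fun s hs =>
    hle (Filter.GenerateSets.basic hs)
  refine ⟨h, ?_, hmem𝒢 B (Set.mem_insert _ _)⟩
  intro X T hT hX
  have hXG : X ∈ G := ⟨T, hT, hX⟩
  have hXm : X ∩ Rinvhat F X ∈ h :=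
    hmem𝒢 _ (Set.mem_insert_of_mem _ ⟨X, hXG, rfl⟩)
  exact ⟨Filter.mem_of_superset hXm Set.inter_subset_left,
    Filter.mem_of_superset hXm Set.inter_subset_right⟩
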